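/- Fix p, k ∈ ℕ, ν ∈ [0,1], μ ∈ [0,1], λ ≥ 0, ρ > 0, A > 0, X > 0. Let Ω(α) = (1−ν)‖α‖₁ + (ν/2)‖α‖₂² be the elastic-net penalty on ℝ^k, and let C = {D ∈ ℝ^{p×k} : (1−μ)‖d^{(j)}‖₁ + (μ/2)‖d^{(j)}‖₂² ≤ 1 for every column d^{(j)} of D}. Then there exists a constant C₀ > 0, depending only on k, ν, μ, λ, ρ, A and X, such that the following holds: for every x ∈ ℝ^p with ‖x‖₂ ≤ X, every pair of symmetric matrices G, G* ∈ ℝ^{k×k} with G ⪰ ρI and G* ⪰ ρI, and every β, β* ∈ ℝ^k, if α is a minimizer of α ↦ (1/2)αᵀGα − αᵀβ + λΩ(α) over ℝ^k and α* is a minimizer of α ↦ (1/2)αᵀG*α − αᵀβ* + λΩ(α) over ℝ^k, with ‖α‖₂ ≤ A and ‖α*‖₂ ≤ A, then sup_{D ∈ C} |g(D) − g*(D)| ≤ C₀·(‖G − G*‖_F + ‖β − β*‖₂), where g(D) = (1/2)αᵀDᵀDα − αᵀDᵀx + λΩ(α) and g*(D) = (1/2)α*ᵀDᵀDα* − α*ᵀDᵀx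 + λΩ(α*). -/

import Mathlib

/-- The elastic-net penalty `Ω(α) = (1−ν)‖α‖₁ + (ν/2)‖α‖₂²` on `ℝ^k`. -/
noncomputable def enetPen {k : ℕ} (ν : ℝ) (a : EuclideanSpace ℝ (Fin k)) : ℝ :=
  (1 - ν) * (∑ i, |a i|) + ν / 2 * (∑ i, (a i) ^ 2)

/-- The elastic-net column norm `(1−μ)‖d‖₁ + (μ/2)‖d‖₂²` on `ℝ^p`. -/
noncomputable def enetColNorm {p : ℕ} (μ : ℝ) (d : Fin p → ℝ) : ℝ :=
  (1 - μ) * (∑ i, |d i|) + μ / 2 * (∑ i, (d i) ^ 2)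

open Finset



lemma cs_abs {n : ℕ} (f g : Fin n → ℝ) :
    |∑ i, f i * g i| ≤ Real.sqrt (∑ i, f i ^ 2) * Real.sqrt (∑ i, g i ^ 2) := by
  rw [← Real.sqrt_sq_eq_abs, ← Real.sqrt_mul (by positivity)]
  exact Real.sqrt_le_sqrt (Finset.sum_mul_sq_le_sq_mul_sq _ _ _)

lemma euc_norm_sq {n : ℕ} (v : EuclideanSpace ℝ (Fin n)) : ‖v‖ ^ 2 = ∑ i, (v i) ^ 2 := by
  rw [EuclideanSpace.norm_eq, Real.sq_sqrt (by positivity)]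
  simp [Real.norm_eq_abs, sq_abs]

lemma coord_le {n : ℕ} (v : EuclideanSpace ℝ (Fin n)) (i : Fin n) : |v i| ≤ ‖v‖ := by
  have h1 : (v i)^2 ≤ ‖v‖^2 := by
    rw [euc_norm_sq]
    exact Finset.single_le_sum (f := fun j => (v j)^2) (fun j _ => sq_nonneg _) (Finset.mem_univ i)
  calc |v i| = Real.sqrt ((v i)^2) := (Real.sqrt_sq_eq_abs _).symm
    _ ≤ Real.sqrt (‖v‖^2) := Real.sqrt_le_sqrt h1
    _ = ‖v‖ := by rw [Real.sqrt_sq (norm_nonneg _)]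

lemma quad_mid {k : ℕ} (G : Matrix (Fin k) (Fin k) ℝ) (a b : Fin k → ℝ) :
    ∑ i, ∑ j, ((a i + b i)/2) * G i j * ((a j + b j)/2)
      = (1/2) * (∑ i, ∑ j, a i * G i j * a j) + (1/2) * (∑ i, ∑ j, b i * G i j * b j)
        - (1/4) * (∑ i, ∑ j, (a i - b i) * G i j * (a j - b j)) := by
  simp only [Finset.mul_sum, ← Finset.sum_sub_distrib, ← Finset.sum_add_distrib]
  exact Finset.sum_congr rfl fun i _ => Finset.sum_congr rfl fun j _ => by ring

lemma entry_le {k : ℕ} (M : Matrix (Fin k) (Fin k) ℝ) (i j : Fin k) :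
    |M i j| ≤ Real.sqrt (∑ i', ∑ j', (M i' j') ^ 2) := by
  rw [← Real.sqrt_sq_eq_abs]
  apply Real.sqrt_le_sqrt
  calc (M i j)^2 ≤ ∑ j', (M i j')^2 :=
        Finset.single_le_sum (f := fun j' => (M i j')^2) (fun _ _ => sq_nonneg _) (Finset.mem_univ j)
    _ ≤ ∑ i', ∑ j', (M i' j')^2 :=
        Finset.single_le_sum (f := fun i' => ∑ j', (M i' j')^2)
          (fun _ _ => Finset.sum_nonneg fun _ _ => sq_nonneg _) (Finset.mem_univ i)

lemma cross_symm {k : ℕ} (M : Matrix (Fin k) (Fin k) ℝ) (hM : M.IsSymm) (u v : Fin k → ℝ) :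
    ∑ i, ∑ j, u i * M i j * v j = ∑ i, ∑ j, v i * M i j * u j := by
  rw [Finset.sum_comm]
  refine Finset.sum_congr rfl fun j _ => Finset.sum_congr rfl fun i _ => ?_
  rw [← hM.apply j i]; ring

lemma quad_diff {k : ℕ} (M : Matrix (Fin k) (Fin k) ℝ) (hM : M.IsSymm) (a b : Fin k → ℝ) :
    (∑ i, ∑ j, a i * M i j * a j) - (∑ i, ∑ j, b i * M i j * b j)
      = ∑ i, ∑ j, (a i - b i) * M i j * (a j + b j) := by
  have expand : ∑ i, ∑ j, (a i - b i) * M i j * (a j + b j)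
      = ((∑ i, ∑ j, a i * M i j * a j) - (∑ i, ∑ j, b i * M i j * b j))
        + ((∑ i, ∑ j, a i * M i j * b j) - (∑ i, ∑ j, b i * M i j * a j)) := by
    simp only [← Finset.sum_sub_distrib, ← Finset.sum_add_distrib]
    exact Finset.sum_congr rfl fun i _ => Finset.sum_congr rfl fun j _ => by ring
  rw [expand, cross_symm M hM a b, sub_self, add_zero]

lemma gram_expand {p k : ℕ} (D : Matrix (Fin p) (Fin k) ℝ) (v : Fin k → ℝ) :
    ∑ i, (∑ j, D i j * v j) ^ 2 = ∑ j, ∑ j', v j * (∑ i, D i j * D i j') * v j' := by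
  have h1 : ∀ i, (∑ j, D i j * v j) ^ 2 = ∑ j, ∑ j', (D i j * v j) * (D i j' * v j') := by
    intro i; rw [sq, Finset.sum_mul_sum]
  simp only [h1]
  rw [Finset.sum_comm]
  refine Finset.sum_congr rfl fun j _ => ?_
  rw [Finset.sum_comm]
  refine Finset.sum_congr rfl fun j' _ => ?_
  rw [Finset.mul_sum, Finset.sum_mul]
  exact Finset.sum_congr rfl fun i _ => by ring

lemma col_sq_le {p : ℕ} {μ : ℝ} (hμ0 : 0 ≤ μ) (hμ1 : μ ≤ 1) (d : Fin p → ℝ)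
    (hd : (1 - μ) * (∑ i, |d i|) + μ / 2 * (∑ i, (d i) ^ 2) ≤ 1) :
    ∑ i, (d i) ^ 2 ≤ 4 := by
  have habs : 0 ≤ ∑ i, |d i| := Finset.sum_nonneg fun _ _ => abs_nonneg _
  have hsq : 0 ≤ ∑ i, (d i) ^ 2 := Finset.sum_nonneg fun _ _ => sq_nonneg _
  rcases le_total μ (1/2) with h | h
  · have h1 : (1 - μ) * (∑ i, |d i|) ≤ 1 := by nlinarith
    have h2 : ∑ i, |d i| ≤ 2 := by nlinarith
    have h3 : ∑ i, (d i) ^ 2 ≤ (∑ i, |d i|) ^ 2 := by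
      have := Finset.sum_sq_le_sq_sum_of_nonneg (s := Finset.univ)
        (f := fun i => |d i|) (fun i _ => abs_nonneg _)
      simpa [sq_abs] using this
    nlinarith
  · nlinarith


lemma pen_mid {k : ℕ} {ν : ℝ} (hν0 : 0 ≤ ν) (hν1 : ν ≤ 1) (a b : EuclideanSpace ℝ (Fin k)) :
    enetPen ν (WithLp.toLp 2 (fun i => (a i + b i) / 2) : EuclideanSpace ℝ (Fin k))
      ≤ (1/2) * enetPen ν a + (1/2) * enetPen ν b := by
  unfold enetPen
  simp only [PiLp.toLp_apply]
  have h1 : ∑ i, |(a i + b i) / 2| ≤ (1/2) * (∑ i, |a i|) + (1/2) * (∑ i, |b i|) := by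
    simp only [Finset.mul_sum, ← Finset.sum_add_distrib]
    refine Finset.sum_le_sum fun i _ => ?_
    rw [abs_div, abs_two]
    have := abs_add_le (a i) (b i)
    linarith
  have h2 : ∑ i, ((a i + b i) / 2) ^ 2 ≤ (1/2) * (∑ i, (a i)^2) + (1/2) * (∑ i, (b i)^2) := by
    simp only [Finset.mul_sum, ← Finset.sum_add_distrib]
    refine Finset.sum_le_sum fun i _ => ?_
    nlinarith [sq_nonneg (a i - b i)]
  have hc1 : (0:ℝ) ≤ 1 - ν := by linarith
  nlinarith [mul_le_mul_of_nonneg_left h1 hc1, mul_le_mul_of_nonneg_left h2 (by linarith : (0:ℝ) ≤ ν/2)]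

lemma min_gap {k : ℕ} {lam ν ρ : ℝ} (hν0 : 0 ≤ ν) (hν1 : ν ≤ 1) (hlam : 0 ≤ lam)
    (G : Matrix (Fin k) (Fin k) ℝ) (β a b : EuclideanSpace ℝ (Fin k))
    (hpd : ∀ v : EuclideanSpace ℝ (Fin k), ρ * ‖v‖ ^ 2 ≤ ∑ i, ∑ j, v i * G i j * v j)
    (hmin : ∀ c : EuclideanSpace ℝ (Fin k),
        (1/2) * (∑ i, ∑ j, a i * G i j * a j) - (∑ i, a i * β i) + lam * enetPen ν a ≤
        (1/2) * (∑ i, ∑ j, c i * G i j * c j) - (∑ i, c i * β i) + lam * enetPen ν c) :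
    (1/4) * (ρ * ‖a - b‖ ^ 2)
      + ((1/2) * (∑ i, ∑ j, a i * G i j * a j) - (∑ i, a i * β i) + lam * enetPen ν a)
      ≤ (1/2) * (∑ i, ∑ j, b i * G i j * b j) - (∑ i, b i * β i) + lam * enetPen ν b := by
  have hmain := hmin (WithLp.toLp 2 (fun i => (a i + b i) / 2) : EuclideanSpace ℝ (Fin k))
  simp only [PiLp.toLp_apply] at hmain
  have hq := quad_mid G a b
  have hl : ∑ i, ((a i + b i)/2) * β i = (1/2) * (∑ i, a i * β i) + (1/2) * (∑ i, b i * β i) := by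
    simp only [Finset.mul_sum, ← Finset.sum_add_distrib]
    exact Finset.sum_congr rfl fun i _ => by ring
  have hp := pen_mid hν0 hν1 a b
  have hpd' := hpd (a - b)
  have hsub : ∑ i, ∑ j, (a - b) i * G i j * (a - b) j
      = ∑ i, ∑ j, (a i - b i) * G i j * (a j - b j) := by
    refine Finset.sum_congr rfl fun i _ => Finset.sum_congr rfl fun j _ => ?_
    simp [PiLp.sub_apply]
  rw [hsub] at hpd'
  have hns : ‖a - b‖ ^ 2 = ‖a - b‖ ^ 2 := rfl
  have hpen : lam * enetPen ν (WithLp.toLp 2 (fun i => (a i + b i) / 2) : EuclideanSpace ℝ (Fin k))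
      ≤ lam * ((1/2) * enetPen ν a + (1/2) * enetPen ν b) :=
    mul_le_mul_of_nonneg_left hp hlam
  rw [hq, hl] at hmain
  nlinarith [hpd', hmain, hpen]

lemma stability {k : ℕ} {lam ν ρ A : ℝ} (hν0 : 0 ≤ ν) (hν1 : ν ≤ 1)
    (hlam : 0 ≤ lam) (hρ : 0 < ρ) (hA : 0 < A)
    (G Gstar : Matrix (Fin k) (Fin k) ℝ) (hG : G.IsSymm) (hGs : Gstar.IsSymm)
    (hpd : ∀ v : EuclideanSpace ℝ (Fin k), ρ * ‖v‖ ^ 2 ≤ ∑ i, ∑ j, v i * G i j * v j)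
    (hpds : ∀ v : EuclideanSpace ℝ (Fin k), ρ * ‖v‖ ^ 2 ≤ ∑ i, ∑ j, v i * Gstar i j * v j)
    (β βstar a astar : EuclideanSpace ℝ (Fin k))
    (hmin : ∀ c : EuclideanSpace ℝ (Fin k),
        (1/2) * (∑ i, ∑ j, a i * G i j * a j) - (∑ i, a i * β i) + lam * enetPen ν a ≤
        (1/2) * (∑ i, ∑ j, c i * G i j * c j) - (∑ i, c i * β i) + lam * enetPen ν c)
    (hmins : ∀ c : EuclideanSpace ℝ (Fin k),
        (1/2) * (∑ i, ∑ j, astar i * Gstar i j * astar j) - (∑ i, astar i * βstar i)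
          + lam * enetPen ν astar ≤
        (1/2) * (∑ i, ∑ j, c i * Gstar i j * c j) - (∑ i, c i * βstar i) + lam * enetPen ν c)
    (ha : ‖a‖ ≤ A) (has : ‖astar‖ ≤ A) :
    ‖a - astar‖ ≤ 2 * ((k:ℝ)^2 * A + k) / ρ
      * (Real.sqrt (∑ i, ∑ j, (G i j - Gstar i j) ^ 2) + ‖β - βstar‖) := by
  set nd : ℝ := ‖a - astar‖ with hnd
  set E1 : ℝ := Real.sqrt (∑ i, ∑ j, (G i j - Gstar i j) ^ 2) with hE1
  set E2 : ℝ := ‖β - βstar‖ with hE2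
  clear_value nd E1 E2
  have hE1n : 0 ≤ E1 := hE1 ▸ Real.sqrt_nonneg _
  have hE2n : 0 ≤ E2 := hE2 ▸ norm_nonneg _
  have hndn : 0 ≤ nd := hnd ▸ norm_nonneg _
  have h1 := min_gap hν0 hν1 hlam G β a astar hpd hmin
  rw [← hnd] at h1
  have h2 := min_gap hν0 hν1 hlam Gstar βstar astar a hpds hmins
  rw [norm_sub_rev astar a, ← hnd] at h2
  -- coordinate bounds
  have hd : ∀ i, |a i - astar i| ≤ nd := by
    intro i
    have := coord_le (a - astar) i
    rw [← hnd] at this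
    simpa [PiLp.sub_apply] using this
  have hs : ∀ i, |astar i + a i| ≤ 2 * A := by
    intro i
    calc |astar i + a i| ≤ |astar i| + |a i| := abs_add_le _ _
      _ ≤ A + A := add_le_add ((coord_le astar i).trans has) ((coord_le a i).trans ha)
      _ = 2 * A := by ring
  have hM : ∀ i j, |G i j - Gstar i j| ≤ E1 := by
    intro i j
    have := entry_le (G - Gstar) i j
    simp only [Matrix.sub_apply] at this
    rw [← hE1] at this
    exact this
  have hB : ∀ i, |β i - βstar i| ≤ E2 := by
    intro i
    have := coord_le (β - βstar) i
    rw [← hE2] at this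
    simpa [PiLp.sub_apply] using this
  -- quadratic difference identity
  have hMsymm : (G - Gstar).IsSymm := hG.sub hGs
  have hqd : (∑ i, ∑ j, astar i * (G i j - Gstar i j) * astar j)
      - (∑ i, ∑ j, a i * (G i j - Gstar i j) * a j)
      = ∑ i, ∑ j, (astar i - a i) * (G i j - Gstar i j) * (astar j + a j) := by
    have := quad_diff (G - Gstar) hMsymm astar a
    simpa [Matrix.sub_apply] using this
  -- bound the cross sum
  have hS : ∑ i, ∑ j, (astar i - a i) * (G i j - Gstar i j) * (astar j + a j)
      ≤ (k:ℝ)^2 * (nd * E1 * (2 * A)) := by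
    calc ∑ i, ∑ j, (astar i - a i) * (G i j - Gstar i j) * (astar j + a j)
        ≤ ∑ i : Fin k, ∑ j : Fin k, nd * E1 * (2 * A) := by
          refine Finset.sum_le_sum fun i _ => Finset.sum_le_sum fun j _ => ?_
          calc (astar i - a i) * (G i j - Gstar i j) * (astar j + a j)
              ≤ |(astar i - a i) * (G i j - Gstar i j) * (astar j + a j)| := le_abs_self _
            _ = |astar i - a i| * |G i j - Gstar i j| * |astar j + a j| := by
                rw [abs_mul, abs_mul]
            _ ≤ nd * E1 * (2 * A) := by
                have hdi : |astar i - a i| ≤ nd := by rw [abs_sub_comm]; exact hd i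
                have hndE1 : (0:ℝ) ≤ nd * E1 := mul_nonneg hndn hE1n
                exact mul_le_mul (mul_le_mul hdi (hM i j) (abs_nonneg _) hndn) (hs j)
                  (abs_nonneg _) hndE1
      _ = (k:ℝ)^2 * (nd * E1 * (2 * A)) := by
          simp [Finset.sum_const, Finset.card_univ, nsmul_eq_mul]; ring
  -- bound the linear sum
  have hT : ∑ i, (a i - astar i) * (β i - βstar i) ≤ (k:ℝ) * (nd * E2) := by
    calc ∑ i, (a i - astar i) * (β i - βstar i)
        ≤ ∑ i : Fin k, nd * E2 := by
          refine Finset.sum_le_sum fun i _ => ?_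
          calc (a i - astar i) * (β i - βstar i)
              ≤ |(a i - astar i) * (β i - βstar i)| := le_abs_self _
            _ = |a i - astar i| * |β i - βstar i| := abs_mul _ _
            _ ≤ nd * E2 := mul_le_mul (hd i) (hB i) (abs_nonneg _) hndn
      _ = (k:ℝ) * (nd * E2) := by simp [Finset.sum_const, Finset.card_univ]
  -- combine: (ρ/2) nd² ≤ (1/2) * cross + linear
  have hcomb : ρ / 2 * nd ^ 2
      ≤ (1/2) * (∑ i, ∑ j, (astar i - a i) * (G i j - Gstar i j) * (astar j + a j))
        + ∑ i, (a i - astar i) * (β i - βstar i) := by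
    have hlin : (∑ i, a i * β i) - (∑ i, astar i * β i)
        + ((∑ i, astar i * βstar i) - (∑ i, a i * βstar i))
        = ∑ i, (a i - astar i) * (β i - βstar i) := by
      simp only [← Finset.sum_sub_distrib, ← Finset.sum_add_distrib]
      exact Finset.sum_congr rfl fun i _ => by ring
    have hq1 : (∑ i, ∑ j, astar i * G i j * astar j) - (∑ i, ∑ j, astar i * Gstar i j * astar j)
        = ∑ i, ∑ j, astar i * (G i j - Gstar i j) * astar j := by
      simp only [← Finset.sum_sub_distrib]
      exact Finset.sum_congr rfl fun i _ => Finset.sum_congr rfl fun j _ => by ring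
    have hq2 : (∑ i, ∑ j, a i * G i j * a j) - (∑ i, ∑ j, a i * Gstar i j * a j)
        = ∑ i, ∑ j, a i * (G i j - Gstar i j) * a j := by
      simp only [← Finset.sum_sub_distrib]
      exact Finset.sum_congr rfl fun i _ => Finset.sum_congr rfl fun j _ => by ring
    linarith [h1, h2, hqd, hlin, hq1, hq2]
  -- conclude
  rcases eq_or_lt_of_le hndn with h0 | h0
  · rw [← h0]
    have : (0:ℝ) ≤ 2 * ((k:ℝ)^2 * A + k) / ρ := by positivity
    exact mul_nonneg this (by linarith)
  · have hkn : (0:ℝ) ≤ (k:ℝ) := Nat.cast_nonneg k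
    have key : ρ / 2 * nd ^ 2
        ≤ (1/2) * ((k:ℝ)^2 * (nd * E1 * (2 * A))) + (k:ℝ) * (nd * E2) := by
      linarith [hcomb, hS, hT]
    clear hS hT hcomb h1 h2 hqd hmin hmins hpd hpds hd hs hM hB ha has hG hGs hMsymm
    have hle : ρ / 2 * nd ^ 2 ≤ nd * (((k:ℝ)^2 * A + k) * (E1 + E2)) := by
      nlinarith [key, hE1n, hE2n, hndn, hkn,
        mul_nonneg (mul_nonneg hndn hkn) hE1n,
        mul_nonneg (mul_nonneg hndn (mul_nonneg (sq_nonneg (k:ℝ)) hA.le)) hE2n]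
    have hstep : ρ / 2 * nd ≤ ((k:ℝ)^2 * A + k) * (E1 + E2) := by
      have h' : nd * (ρ / 2 * nd) ≤ nd * (((k:ℝ)^2 * A + k) * (E1 + E2)) := by
        linarith [hle]
      exact le_of_mul_le_mul_left h' h0
    rw [div_mul_eq_mul_div, le_div_iff₀ hρ]
    linarith [hstep]

lemma lin_swap {p k : ℕ} (D : Matrix (Fin p) (Fin k) ℝ) (v : Fin k → ℝ) (x : Fin p → ℝ) :
    ∑ i, (∑ j, D i j * v j) * x i = ∑ j, v j * (∑ i, D i j * x i) := by
  simp only [Finset.sum_mul, Finset.mul_sum]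
  rw [Finset.sum_comm]
  exact Finset.sum_congr rfl fun j _ => Finset.sum_congr rfl fun i _ => by ring

lemma sqrt_sum_col_le {p : ℕ} {μ : ℝ} (hμ0 : 0 ≤ μ) (hμ1 : μ ≤ 1) (d : Fin p → ℝ)
    (hd : (1 - μ) * (∑ i, |d i|) + μ / 2 * (∑ i, (d i) ^ 2) ≤ 1) :
    Real.sqrt (∑ i, (d i) ^ 2) ≤ 2 := by
  have h4 := col_sq_le hμ0 hμ1 d hd
  calc Real.sqrt (∑ i, (d i) ^ 2) ≤ Real.sqrt 4 := Real.sqrt_le_sqrt h4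
    _ = 2 := by
        rw [show (4:ℝ) = 2^2 by norm_num, Real.sqrt_sq (by norm_num : (0:ℝ) ≤ 2)]
/-- The sup-norm distance over the elastic-net constraint set `C` between the surrogates
built from an approximate code and from the exact code is controlled by the parameter errors
`‖G − G*‖_F + ‖β − β*‖₂`, with a constant depending only on `k, ν, μ, λ, ρ, A, X`. -/
theorem surrogate_supnorm_error_bound
    (k : ℕ) (ν μ lam ρ A X : ℝ)
    (hν0 : 0 ≤ ν) (hν1 : ν ≤ 1) (hμ0 : 0 ≤ μ) (hμ1 : μ ≤ 1)
    (hlam : 0 ≤ lam) (hρ : 0 < ρ) (hA : 0 < A) (hX : 0 < X) :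
    ∃ C₀ > 0, ∀ (p : ℕ) (x : EuclideanSpace ℝ (Fin p)), ‖x‖ ≤ X →
      ∀ (G Gstar : Matrix (Fin k) (Fin k) ℝ), G.IsSymm → Gstar.IsSymm →
      (∀ a : EuclideanSpace ℝ (Fin k), ρ * ‖a‖ ^ 2 ≤ ∑ i, ∑ j, a i * G i j * a j) →
      (∀ a : EuclideanSpace ℝ (Fin k), ρ * ‖a‖ ^ 2 ≤ ∑ i, ∑ j, a i * Gstar i j * a j) →
      ∀ (β βstar : EuclideanSpace ℝ (Fin k)) (a astar : EuclideanSpace ℝ (Fin k)),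
      (∀ b : EuclideanSpace ℝ (Fin k),
        (1 / 2) * (∑ i, ∑ j, a i * G i j * a j) - (∑ i, a i * β i) + lam * enetPen ν a ≤
        (1 / 2) * (∑ i, ∑ j, b i * G i j * b j) - (∑ i, b i * β i) + lam * enetPen ν b) →
      (∀ b : EuclideanSpace ℝ (Fin k),
        (1 / 2) * (∑ i, ∑ j, astar i * Gstar i j * astar j) - (∑ i, astar i * βstar i)
            + lam * enetPen ν astar ≤
        (1 / 2) * (∑ i, ∑ j, b i * Gstar i j * b j) - (∑ i, b i * βstar i)
            + lam * enetPen ν b) →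
      ‖a‖ ≤ A → ‖astar‖ ≤ A →
      ∀ D : Matrix (Fin p) (Fin k) ℝ, (∀ j, enetColNorm μ (fun i => D i j) ≤ 1) →
        |((1 / 2) * (∑ i, (∑ j, D i j * a j) ^ 2) - (∑ i, (∑ j, D i j * a j) * x i)
            + lam * enetPen ν a) -
          ((1 / 2) * (∑ i, (∑ j, D i j * astar j) ^ 2) - (∑ i, (∑ j, D i j * astar j) * x i)
            + lam * enetPen ν astar)| ≤
          C₀ * (Real.sqrt (∑ i, ∑ j, (G i j - Gstar i j) ^ 2) + ‖β - βstar‖) := by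
  have hk : (0:ℝ) ≤ (k:ℝ) := Nat.cast_nonneg k
  set L : ℝ := 4*A*(k:ℝ)^2 + 2*(k:ℝ)*X + lam*((k:ℝ) + A*(k:ℝ)) with hLdef
  set R : ℝ := 2 * ((k:ℝ)^2 * A + (k:ℝ)) / ρ with hRdef
  have hLn : 0 ≤ L := by
    have h1 : 0 ≤ 4*A*(k:ℝ)^2 := by positivity
    have h2 : 0 ≤ 2*(k:ℝ)*X := by positivity
    have h3 : 0 ≤ lam*((k:ℝ) + A*(k:ℝ)) :=
      mul_nonneg hlam (add_nonneg hk (mul_nonneg hA.le hk))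
    rw [hLdef]; linarith
  have hRn : 0 ≤ R := by
    rw [hRdef]
    apply div_nonneg _ hρ.le
    have : 0 ≤ (k:ℝ)^2 * A := mul_nonneg (sq_nonneg _) hA.le
    linarith
  refine ⟨L * R + 1, by nlinarith [mul_nonneg hLn hRn], ?_⟩
  intro p x hx G Gstar hG hGs hpd hpds β βstar a astar hmin hmins ha has D hD
  have hstab := stability hν0 hν1 hlam hρ hA G Gstar hG hGs hpd hpds β βstar a astar
    hmin hmins ha has
  rw [← hRdef] at hstab
  set nd : ℝ := ‖a - astar‖ with hnd
  set E1 : ℝ := Real.sqrt (∑ i, ∑ j, (G i j - Gstar i j) ^ 2) with hE1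
  set E2 : ℝ := ‖β - βstar‖ with hE2
  have hE1n : 0 ≤ E1 := hE1 ▸ Real.sqrt_nonneg _
  have hE2n : 0 ≤ E2 := hE2 ▸ norm_nonneg _
  have hndn : 0 ≤ nd := hnd ▸ norm_nonneg _
  -- coordinate bounds
  have hd : ∀ i, |a i - astar i| ≤ nd := by
    intro i
    have := coord_le (a - astar) i
    rw [← hnd] at this
    simpa [PiLp.sub_apply] using this
  have hs : ∀ i, |a i + astar i| ≤ 2 * A := by
    intro i
    calc |a i + astar i| ≤ |a i| + |astar i| := abs_add_le _ _
      _ ≤ A + A := add_le_add ((coord_le a i).trans ha) ((coord_le astar i).trans has)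
      _ = 2 * A := by ring
  -- column bounds
  have hcol : ∀ j, Real.sqrt (∑ i, (D i j)^2) ≤ 2 := by
    intro j
    exact sqrt_sum_col_le hμ0 hμ1 (fun i => D i j) (by simpa [enetColNorm] using hD j)
  have hC : ∀ j j', |∑ i, D i j * D i j'| ≤ 4 := by
    intro j j'
    calc |∑ i, D i j * D i j'|
        ≤ Real.sqrt (∑ i, (D i j)^2) * Real.sqrt (∑ i, (D i j')^2) := cs_abs _ _
      _ ≤ 2 * 2 := mul_le_mul (hcol j) (hcol j') (Real.sqrt_nonneg _) (by norm_num)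
      _ = 4 := by norm_num
  have hxcol : ∀ j, |∑ i, D i j * x i| ≤ 2 * X := by
    intro j
    have hxn : Real.sqrt (∑ i, (x i)^2) ≤ X := by
      rw [← euc_norm_sq, Real.sqrt_sq (norm_nonneg _)]; exact hx
    calc |∑ i, D i j * x i|
        ≤ Real.sqrt (∑ i, (D i j)^2) * Real.sqrt (∑ i, (x i)^2) := cs_abs _ _
      _ ≤ 2 * X := mul_le_mul (hcol j) hxn (Real.sqrt_nonneg _) (by norm_num)
  -- Gram identity
  have hCsymm : (Matrix.of fun j j' => ∑ i, D i j * D i j').IsSymm := by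
    rw [Matrix.IsSymm]
    ext j j'
    simp only [Matrix.transpose_apply, Matrix.of_apply]
    exact Finset.sum_congr rfl fun i _ => mul_comm _ _
  have hgram : (∑ i, (∑ j, D i j * a j)^2) - (∑ i, (∑ j, D i j * astar j)^2)
      = ∑ j, ∑ j', (a j - astar j) * (∑ i, D i j * D i j') * (a j' + astar j') := by
    rw [gram_expand D a, gram_expand D astar]
    have := quad_diff (Matrix.of fun j j' => ∑ i, D i j * D i j') hCsymm a astar
    simpa [Matrix.of_apply] using this
  have b1 : |(∑ i, (∑ j, D i j * a j)^2) - (∑ i, (∑ j, D i j * astar j)^2)|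
      ≤ (k:ℝ)^2 * (nd * 4 * (2 * A)) := by
    rw [hgram]
    calc |∑ j, ∑ j', (a j - astar j) * (∑ i, D i j * D i j') * (a j' + astar j')|
        ≤ ∑ j, |∑ j', (a j - astar j) * (∑ i, D i j * D i j') * (a j' + astar j')| :=
          Finset.abs_sum_le_sum_abs _ _
      _ ≤ ∑ j, ∑ j', |(a j - astar j) * (∑ i, D i j * D i j') * (a j' + astar j')| :=
          Finset.sum_le_sum fun j _ => Finset.abs_sum_le_sum_abs _ _
      _ ≤ ∑ j : Fin k, ∑ j' : Fin k, nd * 4 * (2 * A) := by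
          refine Finset.sum_le_sum fun j _ => Finset.sum_le_sum fun j' _ => ?_
          rw [abs_mul, abs_mul]
          exact mul_le_mul (mul_le_mul (hd j) (hC j j') (abs_nonneg _) hndn) (hs j')
            (abs_nonneg _) (mul_nonneg hndn (by norm_num))
      _ = (k:ℝ)^2 * (nd * 4 * (2 * A)) := by
          simp [Finset.sum_const, Finset.card_univ, nsmul_eq_mul]; ring
  -- linear identity
  have hlin : (∑ i, (∑ j, D i j * a j) * x i) - (∑ i, (∑ j, D i j * astar j) * x i)
      = ∑ j, (a j - astar j) * (∑ i, D i j * x i) := by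
    rw [lin_swap D a x, lin_swap D astar x]
    simp only [← Finset.sum_sub_distrib]
    exact Finset.sum_congr rfl fun j _ => by ring
  have b2 : |(∑ i, (∑ j, D i j * a j) * x i) - (∑ i, (∑ j, D i j * astar j) * x i)|
      ≤ (k:ℝ) * (nd * (2 * X)) := by
    rw [hlin]
    calc |∑ j, (a j - astar j) * (∑ i, D i j * x i)|
        ≤ ∑ j, |(a j - astar j) * (∑ i, D i j * x i)| := Finset.abs_sum_le_sum_abs _ _
      _ ≤ ∑ j : Fin k, nd * (2 * X) := by
          refine Finset.sum_le_sum fun j _ => ?_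
          rw [abs_mul]
          exact mul_le_mul (hd j) (hxcol j) (abs_nonneg _) hndn
      _ = (k:ℝ) * (nd * (2 * X)) := by
          simp [Finset.sum_const, Finset.card_univ, nsmul_eq_mul]
  -- penalty bound
  have b3 : |enetPen ν a - enetPen ν astar| ≤ (k:ℝ) * nd + A * ((k:ℝ) * nd) := by
    have h5 : |(∑ i, |a i|) - (∑ i, |astar i|)| ≤ (k:ℝ) * nd := by
      rw [← Finset.sum_sub_distrib]
      calc |∑ i, (|a i| - |astar i|)| ≤ ∑ i, |(|a i| - |astar i|)| :=
            Finset.abs_sum_le_sum_abs _ _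
        _ ≤ ∑ i : Fin k, nd := Finset.sum_le_sum fun i _ =>
            (abs_abs_sub_abs_le_abs_sub _ _).trans (hd i)
        _ = (k:ℝ) * nd := by simp [Finset.sum_const, Finset.card_univ, nsmul_eq_mul]
    have h6 : |(∑ i, (a i)^2) - (∑ i, (astar i)^2)| ≤ (k:ℝ) * (nd * (2 * A)) := by
      rw [← Finset.sum_sub_distrib]
      calc |∑ i, ((a i)^2 - (astar i)^2)| ≤ ∑ i, |(a i)^2 - (astar i)^2| :=
            Finset.abs_sum_le_sum_abs _ _
        _ ≤ ∑ i : Fin k, nd * (2 * A) := by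
            refine Finset.sum_le_sum fun i _ => ?_
            have hfac : (a i)^2 - (astar i)^2 = (a i - astar i) * (a i + astar i) := by ring
            rw [hfac, abs_mul]
            exact mul_le_mul (hd i) (hs i) (abs_nonneg _) hndn
        _ = (k:ℝ) * (nd * (2 * A)) := by
            simp [Finset.sum_const, Finset.card_univ, nsmul_eq_mul]
    have hsplit : enetPen ν a - enetPen ν astar
        = (1 - ν) * ((∑ i, |a i|) - (∑ i, |astar i|))
          + ν/2 * ((∑ i, (a i)^2) - (∑ i, (astar i)^2)) := by
      unfold enetPen; ring
    rw [hsplit]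
    calc |(1 - ν) * ((∑ i, |a i|) - (∑ i, |astar i|))
          + ν/2 * ((∑ i, (a i)^2) - (∑ i, (astar i)^2))|
        ≤ |(1 - ν) * ((∑ i, |a i|) - (∑ i, |astar i|))|
          + |ν/2 * ((∑ i, (a i)^2) - (∑ i, (astar i)^2))| := abs_add_le _ _
      _ = (1 - ν) * |(∑ i, |a i|) - (∑ i, |astar i|)|
          + ν/2 * |(∑ i, (a i)^2) - (∑ i, (astar i)^2)| := by
          rw [abs_mul, abs_mul, abs_of_nonneg (by linarith : (0:ℝ) ≤ 1 - ν),
            abs_of_nonneg (by linarith : (0:ℝ) ≤ ν/2)]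
      _ ≤ (k:ℝ) * nd + A * ((k:ℝ) * nd) := by
          have e1 : (1 - ν) * |(∑ i, |a i|) - (∑ i, |astar i|)|
              ≤ |(∑ i, |a i|) - (∑ i, |astar i|)| :=
            mul_le_of_le_one_left (abs_nonneg _) (by linarith)
          have e2 : ν/2 * |(∑ i, (a i)^2) - (∑ i, (astar i)^2)|
              ≤ (1/2) * |(∑ i, (a i)^2) - (∑ i, (astar i)^2)| :=
            mul_le_mul_of_nonneg_right (by linarith) (abs_nonneg _)
          linarith [h5, h6, e1, e2]
  have b3' : |lam * enetPen ν a - lam * enetPen ν astar|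
      ≤ lam * ((k:ℝ) * nd + A * ((k:ℝ) * nd)) := by
    rw [← mul_sub, abs_mul, abs_of_nonneg hlam]
    exact mul_le_mul_of_nonneg_left b3 hlam
  -- Lipschitz bound
  have hfin : |((1 / 2) * (∑ i, (∑ j, D i j * a j) ^ 2) - (∑ i, (∑ j, D i j * a j) * x i)
            + lam * enetPen ν a) -
          ((1 / 2) * (∑ i, (∑ j, D i j * astar j) ^ 2) - (∑ i, (∑ j, D i j * astar j) * x i)
            + lam * enetPen ν astar)| ≤ L * nd := by
    obtain ⟨b1l, b1r⟩ := abs_le.mp b1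
    obtain ⟨b2l, b2r⟩ := abs_le.mp b2
    obtain ⟨b3l, b3r⟩ := abs_le.mp b3'
    rw [abs_le, hLdef]
    constructor <;> linarith [b1l, b1r, b2l, b2r, b3l, b3r]
  calc |((1 / 2) * (∑ i, (∑ j, D i j * a j) ^ 2) - (∑ i, (∑ j, D i j * a j) * x i)
            + lam * enetPen ν a) -
          ((1 / 2) * (∑ i, (∑ j, D i j * astar j) ^ 2) - (∑ i, (∑ j, D i j * astar j) * x i)
            + lam * enetPen ν astar)|
      ≤ L * nd := hfin
    _ ≤ L * (R * (E1 + E2)) := mul_le_mul_of_nonneg_left hstab hLn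
    _ ≤ (L * R + 1) * (E1 + E2) := by linarith [hE1n, hE2n]
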